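/- Suppose M is a 9×9 positive semidefinite complex matrix (a two-qutrit state on ℂ^3⊗ℂ^3) whose partial transpose M^Γ has inertia (4,1,4). Then for every 2×3 complex matrix P of rank two, the 6×6 matrix N = (P⊗I_3) M (P†⊗I_3) has a partial transpose N^Γ (with respect to the 2×3 bipartition) that is not positive semidefinite. -/

import Mathlib

open Matrix Kronecker
open scoped ComplexOrder

/-- Partial transpose on the first factor of an `m × n` bipartite system:
`(ptrans M) ((i,k),(j,l)) = M ((j,k),(i,l))`. -/
def ptrans {m n : ℕ} (M : Matrix (Fin m × Fin n) (Fin m × Fin n) ℂ) :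
    Matrix (Fin m × Fin n) (Fin m × Fin n) ℂ :=
  Matrix.of fun p q => M (q.1, p.2) (p.1, q.2)

/-- Number of negative eigenvalues (with multiplicity) of a Hermitian matrix. -/
noncomputable def iNeg {ι : Type} [Fintype ι] [DecidableEq ι] {M : Matrix ι ι ℂ}
    (hM : M.IsHermitian) : ℕ :=
  (Finset.univ.filter fun i => hM.eigenvalues i < 0).card

/-- Number of zero eigenvalues (with multiplicity) of a Hermitian matrix. -/
noncomputable def iZero {ι : Type} [Fintype ι] [DecidableEq ι] {M : Matrix ι ι ℂ}
    (hM : M.IsHermitian) : ℕ :=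
  (Finset.univ.filter fun i => hM.eigenvalues i = 0).card

/-- Number of positive eigenvalues (with multiplicity) of a Hermitian matrix. -/
noncomputable def iPos {ι : Type} [Fintype ι] [DecidableEq ι] {M : Matrix ι ι ℂ}
    (hM : M.IsHermitian) : ℕ :=
  (Finset.univ.filter fun i => 0 < hM.eigenvalues i).card

lemma ptrans_conj (M : Matrix (Fin 3 × Fin 3) (Fin 3 × Fin 3) ℂ) (P : Matrix (Fin 2) (Fin 3) ℂ) :
    ptrans ((P ⊗ₖ (1 : Matrix (Fin 3) (Fin 3) ℂ)) * M * (Pᴴ ⊗ₖ 1)) =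
      (Pᴴᵀ ⊗ₖ (1 : Matrix (Fin 3) (Fin 3) ℂ)) * ptrans M * (Pᵀ ⊗ₖ 1) := by
  ext ⟨i, k⟩ ⟨j, l⟩
  simp only [ptrans, of_apply]
  erw [mul_apply, mul_apply]
  simp only [ptrans, of_apply, mul_apply, kroneckerMap_apply, one_apply,
    Fintype.sum_prod_type, conjTranspose_apply, transpose_apply,
    mul_ite, ite_mul, mul_zero, zero_mul, mul_one, one_mul,
    Finset.sum_ite_eq, Finset.sum_ite_eq', Finset.mem_univ, if_true,
    Finset.mul_sum, Finset.sum_mul]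
  rw [Finset.sum_comm]
  apply Finset.sum_congr rfl; intro a _
  apply Finset.sum_congr rfl; intro b _
  ring

lemma quad_eigen {ι : Type} [Fintype ι] [DecidableEq ι] {A : Matrix ι ι ℂ}
    (hA : A.IsHermitian) (x : ι → ℂ) :
    star x ⬝ᵥ A *ᵥ x =
      ((∑ i, hA.eigenvalues i *
        Complex.normSq ((star (hA.eigenvectorUnitary : Matrix ι ι ℂ) *ᵥ x) i) : ℝ) : ℂ) := by
  set U : Matrix ι ι ℂ := (hA.eigenvectorUnitary : Matrix ι ι ℂ) with hU
  set c : ι → ℂ := star U *ᵥ x with hc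
  have hspec := hA.spectral_theorem
  calc star x ⬝ᵥ A *ᵥ x
      = star x ⬝ᵥ (U * (diagonal (RCLike.ofReal ∘ hA.eigenvalues) * star U)) *ᵥ x := by
        rw [← mul_assoc]; exact congrArg (fun B => star x ⬝ᵥ B *ᵥ x) hspec
    _ = (star x ᵥ* U) ⬝ᵥ (diagonal (RCLike.ofReal ∘ hA.eigenvalues)) *ᵥ c := by
        rw [← mulVec_mulVec, dotProduct_mulVec, ← mulVec_mulVec]
    _ = star c ⬝ᵥ (diagonal (RCLike.ofReal ∘ hA.eigenvalues)) *ᵥ c := by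
        congr 1
        rw [hc, star_mulVec, star_eq_conjTranspose, conjTranspose_conjTranspose]
    _ = ∑ i, (hA.eigenvalues i : ℂ) * (star (c i) * c i) := by
        simp [dotProduct, mulVec_diagonal]
        apply Finset.sum_congr rfl; intro i _; ring
    _ = _ := by
        push_cast
        apply Finset.sum_congr rfl; intro i _
        congr 1
        rw [Complex.normSq_eq_conj_mul_self]
        rfl

lemma kron_inj (P : Matrix (Fin 2) (Fin 3) ℂ) (hP : P.rank = 2) :
    Function.Injective (mulVecLin (Pᵀ ⊗ₖ (1 : Matrix (Fin 3) (Fin 3) ℂ))) := by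
  have hrk : Pᵀ.rank = 2 := by rw [Matrix.rank_transpose, hP]
  have hrn := Pᵀ.mulVecLin.finrank_range_add_finrank_ker
  rw [Matrix.rank] at hrk
  rw [hrk] at hrn
  simp only [Module.finrank_pi, Fintype.card_fin] at hrn
  have hker : LinearMap.ker Pᵀ.mulVecLin = ⊥ :=
    Submodule.finrank_eq_zero.mp (by omega)
  have hPinj : Function.Injective Pᵀ.mulVecLin := LinearMap.ker_eq_bot.mp hker
  rw [← LinearMap.ker_eq_bot, LinearMap.ker_eq_bot']
  intro y hy
  have hy' : (Pᵀ ⊗ₖ (1 : Matrix (Fin 3) (Fin 3) ℂ)) *ᵥ y = 0 := hy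
  funext jk
  obtain ⟨j, k⟩ := jk
  have h2 : Pᵀ.mulVecLin (fun a => y (a, k)) = Pᵀ.mulVecLin 0 := by
    rw [map_zero]
    funext i
    have h3 := congrFun hy' (i, k)
    simp only [mulVecLin_apply, mulVec, dotProduct, Fintype.sum_prod_type, one_apply,
      kroneckerMap_apply, transpose_apply, mul_ite, ite_mul, mul_zero, zero_mul, mul_one,
      Finset.sum_ite_eq, Finset.sum_ite_eq', Finset.mem_univ, if_true, Pi.zero_apply] at h3 ⊢
    exact h3
  have h4 := congrFun (hPinj h2) j
  simpa using h4

/-- If `M` is a two-qutrit state whose partial transpose has inertia (4,1,4),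
then for any 2×3 matrix `P` of rank two, the projected state
`(P ⊗ I₃) M (P† ⊗ I₃)` is NPT. -/
theorem projected_state_npt
    (M : Matrix (Fin 3 × Fin 3) (Fin 3 × Fin 3) ℂ) (hM : M.PosSemidef)
    (hΓ : (ptrans M).IsHermitian)
    (hneg : iNeg hΓ = 4) (hzero : iZero hΓ = 1) (hpos : iPos hΓ = 4)
    (P : Matrix (Fin 2) (Fin 3) ℂ) (hP : P.rank = 2) :
    ¬ (ptrans ((P ⊗ₖ (1 : Matrix (Fin 3) (Fin 3) ℂ)) * M *
        (Pᴴ ⊗ₖ (1 : Matrix (Fin 3) (Fin 3) ℂ)))).PosSemidef := by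
  intro h
  classical
  set A := ptrans M with hAdef
  set Q : Matrix (Fin 3 × Fin 3) (Fin 2 × Fin 3) ℂ := Pᵀ ⊗ₖ 1 with hQ
  have hQH : Pᴴᵀ ⊗ₖ (1 : Matrix (Fin 3) (Fin 3) ℂ) = Qᴴ := by
    ext ⟨i, k⟩ ⟨j, l⟩
    simp only [hQ, kroneckerMap_apply, conjTranspose_apply, transpose_apply, one_apply, star_mul']
    by_cases hkl : k = l
    · subst hkl; simp [mul_comm]
    · rw [if_neg hkl, if_neg (fun h => hkl h.symm)]
      simp
  have hptr := ptrans_conj M P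
  rw [hQH] at hptr
  -- quadratic form transfer
  have hquad : ∀ y : Fin 2 × Fin 3 → ℂ,
      star y ⬝ᵥ (ptrans ((P ⊗ₖ (1 : Matrix (Fin 3) (Fin 3) ℂ)) * M *
        (Pᴴ ⊗ₖ (1 : Matrix (Fin 3) (Fin 3) ℂ)))) *ᵥ y
        = star (Q *ᵥ y) ⬝ᵥ A *ᵥ (Q *ᵥ y) := by
    intro y
    erw [hptr, ← mulVec_mulVec]
    rw [← mulVec_mulVec, dotProduct_mulVec, star_mulVec]
  -- the range subspace S
  set T := mulVecLin Q with hT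
  have hTinj : Function.Injective T := kron_inj P hP
  set S := LinearMap.range T with hS
  have hSrank : Module.finrank ℂ S = 6 := by
    rw [hS, LinearMap.finrank_range_of_inj hTinj]
    simp [Module.finrank_pi]
  -- eigen data
  set U : Matrix (Fin 3 × Fin 3) (Fin 3 × Fin 3) ℂ := (hΓ.eigenvectorUnitary : Matrix (Fin 3 × Fin 3) (Fin 3 × Fin 3) ℂ)
    with hU
  have hU1 : star U * U = 1 := mem_unitaryGroup_iff'.mp hΓ.eigenvectorUnitary.2
  have hU2 : U * star U = 1 := mem_unitaryGroup_iff.mp hΓ.eigenvectorUnitary.2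
  set F : Finset (Fin 3 × Fin 3) := Finset.univ.filter (fun i => hΓ.eigenvalues i < 0) with hF
  have hFcard : F.card = 4 := hneg
  -- the equivalence x ↦ star U *ᵥ x
  set e : (Fin 3 × Fin 3 → ℂ) ≃ₗ[ℂ] (Fin 3 × Fin 3 → ℂ) :=
    LinearEquiv.ofLinear (mulVecLin (star U)) (mulVecLin U)
      (by rw [← Matrix.mulVecLin_mul, hU1, Matrix.mulVecLin_one])
      (by rw [← Matrix.mulVecLin_mul, hU2, Matrix.mulVecLin_one]) with he
  -- subspace of coordinates supported on F
  set π : (Fin 3 × Fin 3 → ℂ) →ₗ[ℂ] ({i : Fin 3 × Fin 3 // i ∉ F} → ℂ) :=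
    LinearMap.funLeft ℂ ℂ Subtype.val with hπ
  set V := LinearMap.ker π with hV
  have hπsurj : Function.Surjective π :=
    LinearMap.funLeft_surjective_of_injective ℂ ℂ _ Subtype.val_injective
  have hVrank : Module.finrank ℂ V = 4 := by
    have hrn := π.finrank_range_add_finrank_ker
    rw [LinearMap.range_eq_top.mpr hπsurj] at hrn
    have hcard : Fintype.card {i : Fin 3 × Fin 3 // i ∉ F} = 5 := by
      have := Fintype.card_subtype_compl (fun i : Fin 3 × Fin 3 => i ∈ F)
      simp only [Fintype.card_coe, hFcard] at this
      simpa using this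
    simp only [finrank_top, Module.finrank_pi, hcard, Fintype.card_prod,
      Fintype.card_fin] at hrn
    rw [hV]
    omega
  set W := V.comap e.toLinearMap with hW
  have hWrank : Module.finrank ℂ W = 4 := by
    rw [hW, Submodule.comap_equiv_eq_map_symm e V, LinearEquiv.finrank_map_eq, hVrank]
  -- dimension count
  have hdim : 1 ≤ Module.finrank ℂ (S ⊓ W : Submodule ℂ (Fin 3 × Fin 3 → ℂ)) := by
    have hsum := Submodule.finrank_sup_add_finrank_inf_eq S W
    have hle : Module.finrank ℂ (S ⊔ W : Submodule ℂ (Fin 3 × Fin 3 → ℂ)) ≤ 9 := by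
      have := Submodule.finrank_le (S ⊔ W)
      simpa [Module.finrank_pi] using this
    rw [hSrank, hWrank] at hsum
    omega
  have hne : (S ⊓ W : Submodule ℂ (Fin 3 × Fin 3 → ℂ)) ≠ ⊥ := by
    intro hbot
    rw [hbot, finrank_bot] at hdim
    omega
  obtain ⟨x, hx, hx0⟩ := Submodule.exists_mem_ne_zero_of_ne_bot hne
  -- coordinates of x
  set c : Fin 3 × Fin 3 → ℂ := star U *ᵥ x with hcdef
  have hcW : ∀ i, i ∉ F → c i = 0 := by
    intro i hi
    have hxW : x ∈ W := hx.2
    have : π (e x) = 0 := hxW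
    have := congrFun (congrArg (fun f => (f : _ → ℂ)) this) ⟨i, hi⟩
    simpa [hπ, he, LinearMap.funLeft, hcdef] using this
  have hc0 : c ≠ 0 := by
    intro hc
    apply hx0
    have : e x = 0 := hc
    exact e.injective (by simpa using this)
  -- negativity of quadratic form at x
  have hneg2 : (∑ i, hΓ.eigenvalues i * Complex.normSq (c i)) < 0 := by
    obtain ⟨i0, hi0⟩ := Function.ne_iff.mp hc0
    have hi0F : i0 ∈ F := by
      by_contra hi0F
      exact hi0 (hcW i0 hi0F)
    have hi0neg : hΓ.eigenvalues i0 < 0 := (Finset.mem_filter.mp hi0F).2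
    have : ∑ i, hΓ.eigenvalues i * Complex.normSq (c i) <
        ∑ _i : Fin 3 × Fin 3, (0 : ℝ) := by
      apply Finset.sum_lt_sum
      · intro i _
        by_cases hiF : i ∈ F
        · have : hΓ.eigenvalues i < 0 := (Finset.mem_filter.mp hiF).2
          exact mul_nonpos_of_nonpos_of_nonneg this.le (Complex.normSq_nonneg _)
        · simp [hcW i hiF]
      · exact ⟨i0, Finset.mem_univ _, by
          have h1 : 0 < Complex.normSq (c i0) := Complex.normSq_pos.mpr hi0
          exact mul_neg_of_neg_of_pos hi0neg h1⟩
    simpa using this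
  -- contradiction with PSD
  obtain ⟨y, hy⟩ := hx.1
  have hpsd := h.dotProduct_mulVec_nonneg y
  rw [hquad y] at hpsd
  have hQy : Q *ᵥ y = x := hy
  rw [hQy, quad_eigen hΓ x] at hpsd
  rw [Complex.zero_le_real] at hpsd
  exact absurd hpsd (not_le.mpr hneg2)
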